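/- arXiv:1808.04468 — 3 statements merged into one kernel-verified Lean document; each statement's English description precedes it below -/
import Mathlib

section
/- Let C be a real-valued random variable on a finite probability space with distribution p, and let α ∈ (0,1]. Then the conditional value-at-risk ρ_α[C] := inf_{ν ∈ ℝ} (ν + (1/α)·E[(C − ν)₊]) satisfies ρ_α[C] = sup { E_p[ζ·C] : ζ : Ω → [0, 1/α], E_p[ζ] = 1 }. -/
/-- CVaR dual representation: the infimum (Rockafellar–Uryasev) form of CVaR
equals the supremum over the risk envelope. -/
theorem cvar_dual_representation
    {Ω : Type*} [Fintype Ω] (p : Ω → ℝ) (C : Ω → ℝ) (α : ℝ)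
    (hα : α ∈ Set.Ioc (0:ℝ) 1)
    (hp0 : ∀ ω, 0 ≤ p ω) (hp1 : ∑ ω, p ω = 1) :
    (⨅ ν : ℝ, ν + (1/α) * ∑ ω, p ω * max (C ω - ν) 0) =
      sSup {x : ℝ | ∃ ζ : Ω → ℝ, (∀ ω, 0 ≤ ζ ω ∧ ζ ω ≤ 1/α) ∧
        (∑ ω, ζ ω * p ω = 1) ∧ x = ∑ ω, p ω * (ζ ω * C ω)} := by
  classical
  obtain ⟨hα0, hα1⟩ := hα
  set S : Set ℝ := {x : ℝ | ∃ ζ : Ω → ℝ, (∀ ω, 0 ≤ ζ ω ∧ ζ ω ≤ 1/α) ∧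
        (∑ ω, ζ ω * p ω = 1) ∧ x = ∑ ω, p ω * (ζ ω * C ω)} with hS
  set f : ℝ → ℝ := fun ν => ν + (1/α) * ∑ ω, p ω * max (C ω - ν) 0 with hf
  -- weak duality
  have hub : ∀ x ∈ S, ∀ ν : ℝ, x ≤ f ν := by
    rintro x ⟨ζ, hζbd, hζ1, rfl⟩ ν
    have key : ∀ ω, p ω * (ζ ω * C ω) ≤
        p ω * ((1/α) * max (C ω - ν) 0) + ν * (ζ ω * p ω) := by
      intro ω
      obtain ⟨h0, h1⟩ := hζbd ω
      have hp := hp0 ω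
      rcases le_or_gt ν (C ω) with h | h
      · have hmax : max (C ω - ν) 0 = C ω - ν := max_eq_left (by linarith)
        rw [hmax]
        have : ζ ω * (C ω - ν) ≤ (1/α) * (C ω - ν) :=
          mul_le_mul_of_nonneg_right h1 (by linarith)
        nlinarith
      · have hmax : max (C ω - ν) 0 = 0 := max_eq_right (by linarith)
        rw [hmax]
        have : ζ ω * (C ω - ν) ≤ 0 := mul_nonpos_of_nonneg_of_nonpos h0 (by linarith)
        nlinarith
    calc ∑ ω, p ω * (ζ ω * C ω)
        ≤ ∑ ω, (p ω * ((1/α) * max (C ω - ν) 0) + ν * (ζ ω * p ω)) :=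
          Finset.sum_le_sum fun ω _ => key ω
      _ = (∑ ω, p ω * ((1/α) * max (C ω - ν) 0)) + ν * ∑ ω, ζ ω * p ω := by
          rw [Finset.sum_add_distrib, ← Finset.mul_sum]
      _ = f ν := by
          rw [hζ1, hf]
          simp only [mul_one]
          rw [add_comm]
          congr 1
          rw [Finset.mul_sum]
          exact Finset.sum_congr rfl fun ω _ => by ring
  -- Ω nonempty
  have hΩ : Nonempty Ω := by
    rcases isEmpty_or_nonempty Ω with h | h
    · simp [Finset.univ_eq_empty] at hp1
    · exact h
  -- quantile
  set s : Finset ℝ := Finset.image C Finset.univ with hsdef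
  have hs : s.Nonempty := (Finset.univ_nonempty).image C
  have hCs : ∀ ω, C ω ∈ s := fun ω => Finset.mem_image_of_mem C (Finset.mem_univ ω)
  set G : ℝ → ℝ := fun v => ∑ ω, if v < C ω then p ω else 0 with hG
  have hGmax : G (s.max' hs) = 0 := by
    apply Finset.sum_eq_zero
    intro ω _
    rw [if_neg]
    exact not_lt.mpr (Finset.le_max' s _ (hCs ω))
  set T : Finset ℝ := s.filter (fun v => G v ≤ α) with hT
  have hTne : T.Nonempty := ⟨s.max' hs, Finset.mem_filter.mpr ⟨s.max'_mem hs, by rw [hGmax]; linarith⟩⟩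
  set ν : ℝ := T.min' hTne with hν
  have hνT : ν ∈ T := T.min'_mem hTne
  have hνs : ν ∈ s := (Finset.mem_filter.mp hνT).1
  have hGν : G ν ≤ α := (Finset.mem_filter.mp hνT).2
  set A : ℝ := G ν with hA
  set M : ℝ := ∑ ω, if C ω = ν then p ω else 0 with hM
  have hA0 : 0 ≤ A := Finset.sum_nonneg fun ω _ => by split_ifs <;> [exact hp0 ω; exact le_refl 0]
  have hM0 : 0 ≤ M := Finset.sum_nonneg fun ω _ => by split_ifs <;> [exact hp0 ω; exact le_refl 0]
  -- α ≤ A + M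
  have hαAM : α ≤ A + M := by
    have hAM : A + M = ∑ ω, if ν ≤ C ω then p ω else 0 := by
      rw [hA, hM, hG, ← Finset.sum_add_distrib]
      refine Finset.sum_congr rfl fun ω _ => ?_
      rcases lt_trichotomy ν (C ω) with h | h | h
      · rw [if_pos h, if_neg (by linarith), if_pos h.le]; ring
      · rw [if_neg (by linarith), if_pos h.symm, if_pos h.le]; ring
      · rw [if_neg (by linarith), if_neg (by linarith), if_neg (by linarith)]; ring
    rw [hAM]
    by_cases hlt : ∃ v ∈ s, v < ν
    · set s' : Finset ℝ := s.filter (fun v => v < ν) with hs'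
      have hs'ne : s'.Nonempty := by
        obtain ⟨v, hv, hv'⟩ := hlt
        exact ⟨v, Finset.mem_filter.mpr ⟨hv, hv'⟩⟩
      set v' : ℝ := s'.max' hs'ne with hv'
      have hv's : v' ∈ s := (Finset.mem_filter.mp (s'.max'_mem hs'ne)).1
      have hv'lt : v' < ν := (Finset.mem_filter.mp (s'.max'_mem hs'ne)).2
      have hv'T : v' ∉ T := by
        intro h
        exact absurd (T.min'_le v' h) (not_le.mpr hv'lt)
      have hGv' : α < G v' := by
        by_contra h
        exact hv'T (Finset.mem_filter.mpr ⟨hv's, not_lt.mp h⟩)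
      have heq : G v' = ∑ ω, if ν ≤ C ω then p ω else 0 := by
        refine Finset.sum_congr rfl fun ω _ => ?_
        congr 1
        apply propext
        constructor
        · intro h
          by_contra hc
          push_neg at hc
          have : C ω ∈ s' := Finset.mem_filter.mpr ⟨hCs ω, hc⟩
          exact absurd (s'.le_max' _ this) (not_le.mpr h)
        · intro h; linarith
      linarith [heq ▸ hGv']
    · push_neg at hlt
      have : (∑ ω, if ν ≤ C ω then p ω else 0) = ∑ ω, p ω := by
        refine Finset.sum_congr rfl fun ω _ => ?_
        rw [if_pos (hlt (C ω) (hCs ω))]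
      rw [this, hp1]; linarith
  -- define the optimal ζ
  set c : ℝ := if M = 0 then 0 else (α - A) / (α * M) with hc
  have hc0 : 0 ≤ c := by
    rw [hc]
    split_ifs with h
    · exact le_refl 0
    · have hMpos : 0 < M := lt_of_le_of_ne hM0 (Ne.symm h)
      have hAα : A ≤ α := hGν
      apply div_nonneg (by linarith) (by positivity)
  have hc1 : c ≤ 1/α := by
    rw [hc]
    split_ifs with h
    · positivity
    · have hMpos : 0 < M := lt_of_le_of_ne hM0 (Ne.symm h)
      rw [div_le_div_iff₀ (by positivity) hα0]
      nlinarith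
  set ζ : Ω → ℝ := fun ω => if ν < C ω then 1/α else if C ω = ν then c else 0 with hζ
  have hζbd : ∀ ω, 0 ≤ ζ ω ∧ ζ ω ≤ 1/α := by
    intro ω
    rw [hζ]
    dsimp only
    split_ifs
    · exact ⟨by positivity, le_refl _⟩
    · exact ⟨hc0, hc1⟩
    · exact ⟨le_refl 0, by positivity⟩
  have hζsplit : ∀ ω, ζ ω * p ω =
      (if ν < C ω then (1/α) * p ω else 0) + (if C ω = ν then c * p ω else 0) := by
    intro ω
    rw [hζ]
    dsimp only
    split_ifs with h1 h2 <;> try ring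
    exfalso; rw [h2] at h1; exact lt_irrefl ν h1
  have hζ1 : ∑ ω, ζ ω * p ω = 1 := by
    have : ∑ ω, ζ ω * p ω = (1/α) * A + c * M := by
      rw [hA, hM, hG, Finset.mul_sum, Finset.mul_sum, ← Finset.sum_add_distrib]
      refine Finset.sum_congr rfl fun ω _ => ?_
      rw [hζsplit ω]
      congr 1
      · split_ifs <;> simp
      · split_ifs <;> simp
    rw [this, hc]
    split_ifs with h
    · have hAα : A ≤ α := hGν
      have : A = α := by rw [h] at hαAM; linarith
      rw [this]
      field_simp
      ring
    · have hMpos : 0 < M := lt_of_le_of_ne hM0 (Ne.symm h)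
      field_simp
      ring
  -- pointwise identity at the quantile
  have hζC : ∑ ω, p ω * (ζ ω * C ω) = f ν := by
    have key : ∀ ω, p ω * (ζ ω * C ω) =
        p ω * ((1/α) * max (C ω - ν) 0) + ν * (ζ ω * p ω) := by
      intro ω
      have hpt : ζ ω * (C ω - ν) = (1/α) * max (C ω - ν) 0 := by
        rw [hζ]
        dsimp only
        rcases lt_trichotomy ν (C ω) with h | h | h
        · rw [if_pos h, max_eq_left (by linarith)]
        · rw [if_neg (by linarith), if_pos h.symm, h.symm, max_eq_right (by linarith)]
          ring
        · rw [if_neg (by linarith), if_neg (by linarith), max_eq_right (by linarith)]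
          ring
      linear_combination p ω * hpt
    calc ∑ ω, p ω * (ζ ω * C ω)
        = ∑ ω, (p ω * ((1/α) * max (C ω - ν) 0) + ν * (ζ ω * p ω)) :=
          Finset.sum_congr rfl fun ω _ => key ω
      _ = (∑ ω, p ω * ((1/α) * max (C ω - ν) 0)) + ν * ∑ ω, ζ ω * p ω := by
          rw [Finset.sum_add_distrib, ← Finset.mul_sum]
      _ = f ν := by
          rw [hζ1, hf]
          simp only [mul_one]
          rw [add_comm]
          congr 1
          rw [Finset.mul_sum]
          exact Finset.sum_congr rfl fun ω _ => by ring
  set x : ℝ := ∑ ω, p ω * (ζ ω * C ω) with hx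
  have hxS : x ∈ S := ⟨ζ, hζbd, hζ1, rfl⟩
  have hbddS : BddAbove S := ⟨f 0, fun y hy => hub y hy 0⟩
  have hbddf : BddBelow (Set.range f) := by
    refine ⟨x, ?_⟩
    rintro y ⟨μ, rfl⟩
    exact hub x hxS μ
  apply le_antisymm
  · calc (⨅ μ : ℝ, f μ) ≤ f ν := ciInf_le hbddf ν
      _ = x := hζC.symm
      _ ≤ sSup S := le_csSup hbddS hxS
  · exact csSup_le ⟨x, hxS⟩ fun y hy => le_ciInf fun μ => hub y hy μ
end

section
/- Let d and d' be finitely supported nonnegative measures on a finite set X with equal total mass m > 0. Then sup_{f : X → (0,1)} Σ_{x ∈ X} [d(x)·log f(x) + d'(x)·log(1 − f(x))] = −m·log 4 + 2m·D_JS(d/m, d'/m), where D_JS(p,q) = (1/2)·KL(p ‖ (p+q)/2) + (1/2)·KL(q ‖ (p+q)/2) is the Jensen–Shannon divergence of the normalized probability measures. -/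
/-- Pointwise upper bound: the optimal discriminator value dominates. -/
private lemma gan_aux_ub {a b f : ℝ} (ha : 0 ≤ a) (hb : 0 ≤ b)
    (hf0 : 0 < f) (hf1 : f < 1) :
    a * Real.log f + b * Real.log (1 - f) ≤
      a * Real.log (a / (a + b)) + b * Real.log (b / (a + b)) := by
  have hlf : Real.log f ≤ 0 := Real.log_nonpos hf0.le hf1.le
  have hlf' : Real.log (1 - f) ≤ 0 := Real.log_nonpos (by linarith) (by linarith)
  rcases eq_or_lt_of_le ha with h | ha
  · rcases eq_or_lt_of_le hb with h' | hb
    · simp [← h, ← h']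
    · have hbb : b / (a + b) = 1 := by rw [← h, zero_add, div_self hb.ne']
      rw [hbb, ← h]
      simp only [zero_mul, zero_add, Real.log_one, mul_zero]
      have := mul_le_mul_of_nonneg_left hlf' hb.le
      simpa using this
  · rcases eq_or_lt_of_le hb with h' | hb
    · have haa : a / (a + b) = 1 := by rw [← h', add_zero, div_self ha.ne']
      rw [haa, ← h']
      simp only [zero_mul, add_zero, Real.log_one, mul_zero]
      have := mul_le_mul_of_nonneg_left hlf ha.le
      simpa using this
    · set s := a + b with hs
      have hspos : 0 < s := by positivity
      have hf1' : 0 < 1 - f := by linarith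
      have h1 : Real.log (f * s / a) ≤ f * s / a - 1 :=
        Real.log_le_sub_one_of_pos (div_pos (mul_pos hf0 hspos) ha)
      have h2 : Real.log ((1 - f) * s / b) ≤ (1 - f) * s / b - 1 :=
        Real.log_le_sub_one_of_pos (div_pos (mul_pos hf1' hspos) hb)
      have e1 : Real.log (f * s / a) = Real.log f - Real.log (a / s) := by
        rw [Real.log_div (by positivity) ha.ne', Real.log_mul hf0.ne' hspos.ne',
          Real.log_div ha.ne' hspos.ne']
        ring
      have e2 : Real.log ((1 - f) * s / b) = Real.log (1 - f) - Real.log (b / s) := by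
        rw [Real.log_div (by positivity) hb.ne', Real.log_mul hf1'.ne' hspos.ne',
          Real.log_div hb.ne' hspos.ne']
        ring
      have ha' : a * (Real.log f - Real.log (a / s)) ≤ f * s - a := by
        rw [← e1]
        calc a * Real.log (f * s / a) ≤ a * (f * s / a - 1) :=
              mul_le_mul_of_nonneg_left h1 ha.le
          _ = f * s - a := by field_simp
      have hb' : b * (Real.log (1 - f) - Real.log (b / s)) ≤ (1 - f) * s - b := by
        rw [← e2]
        calc b * Real.log ((1 - f) * s / b) ≤ b * ((1 - f) * s / b - 1) :=
              mul_le_mul_of_nonneg_left h2 hb.le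
          _ = (1 - f) * s - b := by field_simp
      have hzero : f * s - a + ((1 - f) * s - b) = 0 := by rw [hs]; ring
      rw [mul_sub] at ha' hb'
      linarith

/-- Per-point identity for the RHS terms. -/
private lemma gan_rhs_term {a b m : ℝ} (ha : 0 ≤ a) (hb : 0 ≤ b) (hm : 0 < m) :
    a * Real.log ((a / m) / ((a / m + b / m) / 2)) =
      a * Real.log 2 + a * Real.log (a / (a + b)) := by
  rcases eq_or_lt_of_le ha with h | ha
  · simp [← h]
  · have hab : 0 < a + b := by linarith
    have harg : (a / m) / ((a / m + b / m) / 2) = 2 * (a / (a + b)) := by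
      rw [← add_div]
      field_simp
    rw [harg, Real.log_mul two_ne_zero (div_pos ha hab).ne']
    ring

/-- Optimal discriminator identity: for measures d, d' of equal total mass m > 0,
the supremum of the GAN log-loss objective equals −m·log 4 plus 2m times the
Jensen–Shannon divergence of the normalized measures. -/
theorem gan_objective_eq_js
    {X : Type*} [Fintype X] (d d' : X → ℝ) (m : ℝ)
    (hd : ∀ x, 0 ≤ d x) (hd' : ∀ x, 0 ≤ d' x)
    (hm : 0 < m) (hmd : ∑ x, d x = m) (hmd' : ∑ x, d' x = m) :
    sSup {S : ℝ | ∃ f : X → ℝ, (∀ x, f x ∈ Set.Ioo (0:ℝ) 1) ∧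
        S = ∑ x, (d x * Real.log (f x) + d' x * Real.log (1 - f x))} =
      -m * Real.log 4 +
        2 * m * ((1/2) * ∑ x, (d x / m) * Real.log ((d x / m) / ((d x / m + d' x / m) / 2))
               + (1/2) * ∑ x, (d' x / m) * Real.log ((d' x / m) / ((d x / m + d' x / m) / 2))) := by
  classical
  have hmne : m ≠ 0 := hm.ne'
  set V : ℝ := ∑ x, (d x * Real.log (d x / (d x + d' x)) +
      d' x * Real.log (d' x / (d x + d' x))) with hVdef
  set SS : Set ℝ := {S : ℝ | ∃ f : X → ℝ, (∀ x, f x ∈ Set.Ioo (0:ℝ) 1) ∧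
      S = ∑ x, (d x * Real.log (f x) + d' x * Real.log (1 - f x))} with hSS
  -- V is an upper bound
  have hub : ∀ S ∈ SS, S ≤ V := by
    rintro S ⟨f, hf, rfl⟩
    exact Finset.sum_le_sum fun x _ => gan_aux_ub (hd x) (hd' x) (hf x).1 (hf x).2
  have hne : SS.Nonempty := by
    refine ⟨∑ x, (d x * Real.log ((1:ℝ)/2) + d' x * Real.log (1 - (1:ℝ)/2)),
      fun _ => (1:ℝ)/2, fun x => ⟨by norm_num, by norm_num⟩, rfl⟩
  have hbdd : BddAbove SS := ⟨V, hub⟩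
  -- key : sSup SS = V
  have key : sSup SS = V := by
    refine le_antisymm (csSup_le hne hub) ?_
    rw [Real.le_sSup_iff hbdd hne]
    intro ε hε
    set e : ℝ := ε / (4 * m) with he
    have heneg : e < 0 := div_neg_of_neg_of_pos hε (by positivity)
    set c : ℝ := Real.exp e with hc
    have hc0 : 0 < c := Real.exp_pos e
    have hc1 : c < 1 := Real.exp_lt_one_iff.mpr heneg
    have hlogc : Real.log c = e := Real.log_exp e
    set f : X → ℝ := fun x => if 0 < d x then (if 0 < d' x then d x / (d x + d' x) else c)
      else (if 0 < d' x then 1 - c else 1/2) with hfdef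
    have hfmem : ∀ x, f x ∈ Set.Ioo (0:ℝ) 1 := by
      intro x
      simp only [hfdef]
      split_ifs with h1 h2 h3
      · have hs : 0 < d x + d' x := by linarith
        exact ⟨div_pos h1 hs, (div_lt_one hs).2 (by linarith)⟩
      · exact ⟨hc0, hc1⟩
      · exact ⟨by linarith, by linarith⟩
      · norm_num
    have hper : ∀ x, (d x * Real.log (d x / (d x + d' x)) +
        d' x * Real.log (d' x / (d x + d' x))) + (d x + d' x) * e ≤
        d x * Real.log (f x) + d' x * Real.log (1 - f x) := by
      intro x
      simp only [hfdef]
      rcases lt_or_eq_of_le (hd x) with h1 | h1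
      · rcases lt_or_eq_of_le (hd' x) with h2 | h2
        · rw [if_pos h1, if_pos h2]
          have hs : 0 < d x + d' x := by linarith
          have h1f : 1 - d x / (d x + d' x) = d' x / (d x + d' x) := by
            field_simp
            ring
          rw [h1f]
          nlinarith [mul_pos hs (neg_pos.2 heneg)]
        · rw [if_pos h1, if_neg (by rw [← h2]; exact lt_irrefl 0)]
          rw [← h2]
          have : d x / (d x + 0) = 1 := by rw [add_zero, div_self h1.ne']
          rw [this]
          simp [hlogc]
      · rw [if_neg (by rw [← h1]; exact lt_irrefl 0)]
        rcases lt_or_eq_of_le (hd' x) with h2 | h2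
        · rw [if_pos h2, ← h1]
          have h1f : 1 - (1 - c) = c := by ring
          rw [h1f]
          have : d' x / (0 + d' x) = 1 := by rw [zero_add, div_self h2.ne']
          rw [this]
          simp [hlogc]
        · rw [← h1, ← h2]
          simp
    refine ⟨∑ x, (d x * Real.log (f x) + d' x * Real.log (1 - f x)),
      ⟨f, hfmem, rfl⟩, ?_⟩
    have hsum : V + (2 * m) * e ≤ ∑ x, (d x * Real.log (f x) + d' x * Real.log (1 - f x)) := by
      have hstep := Finset.sum_le_sum fun x (_ : x ∈ Finset.univ) => hper x
      rw [Finset.sum_add_distrib, ← Finset.sum_mul] at hstep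
      have h2m : ∑ i, (d i + d' i) = m + m := by
        rw [Finset.sum_add_distrib, hmd, hmd']
      rw [h2m] at hstep
      calc V + (2 * m) * e
          = (∑ x, (d x * Real.log (d x / (d x + d' x)) +
              d' x * Real.log (d' x / (d x + d' x)))) + (m + m) * e := by
            rw [hVdef]; ring
        _ ≤ _ := hstep
    have h2me : (2 * m) * e = ε / 2 := by
      rw [he]; field_simp; ring
    rw [h2me] at hsum
    linarith
  rw [key]
  -- Now show V equals the RHS
  have h4 : Real.log 4 = 2 * Real.log 2 := by
    rw [show (4:ℝ) = 2^2 by norm_num, Real.log_pow]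
    norm_num
  have hS1 : ∑ x, (d x / m) * Real.log ((d x / m) / ((d x / m + d' x / m) / 2)) =
      (m * Real.log 2 + ∑ x, d x * Real.log (d x / (d x + d' x))) / m := by
    have hterm : ∀ x, (d x / m) * Real.log ((d x / m) / ((d x / m + d' x / m) / 2)) =
        (d x * Real.log 2 + d x * Real.log (d x / (d x + d' x))) / m := by
      intro x
      rw [div_mul_eq_mul_div, gan_rhs_term (hd x) (hd' x) hm]
    rw [Finset.sum_congr rfl fun x _ => hterm x, ← Finset.sum_div,
      Finset.sum_add_distrib, ← Finset.sum_mul, hmd]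
  have hS2 : ∑ x, (d' x / m) * Real.log ((d' x / m) / ((d x / m + d' x / m) / 2)) =
      (m * Real.log 2 + ∑ x, d' x * Real.log (d' x / (d x + d' x))) / m := by
    have hterm : ∀ x, (d' x / m) * Real.log ((d' x / m) / ((d x / m + d' x / m) / 2)) =
        (d' x * Real.log 2 + d' x * Real.log (d' x / (d x + d' x))) / m := by
      intro x
      rw [show d x / m + d' x / m = d' x / m + d x / m from add_comm _ _,
        div_mul_eq_mul_div, gan_rhs_term (hd' x) (hd x) hm,
        show d' x + d x = d x + d' x from add_comm _ _]
    rw [Finset.sum_congr rfl fun x _ => hterm x, ← Finset.sum_div,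
      Finset.sum_add_distrib, ← Finset.sum_mul, hmd']
  have hVsplit : V = (∑ x, d x * Real.log (d x / (d x + d' x))) +
      ∑ x, d' x * Real.log (d' x / (d x + d' x)) := Finset.sum_add_distrib
  rw [h4, hS1, hS2, hVsplit]
  field_simp
  ring
end

section
/- Let α ∈ (0,1] and δ > 0. There exist a finite probability space, a 1-Lipschitz function f : ℝ → ℝ, and real-valued random variables X (for the agent) and Y (for the expert) taking values in ℝ, such that the Wasserstein-1 distance between the laws of X and Y is at most δ, yet ρ_α[f(X)] − ρ_α[f(Y)] ≥ δ/α, where ρ_α is conditional value-at-risk at level α. -/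
/-- Worst-case risk gap: for any α ∈ (0,1] and δ > 0, there is a finite
probability space, a 1-Lipschitz cost f, and random variables X, Y whose laws
are within Wasserstein-1 distance δ, yet CVaR_α of f(X) exceeds CVaR_α of f(Y)
by at least δ/α. -/
theorem wasserstein_close_but_cvar_far (α δ : ℝ)
    (hα : α ∈ Set.Ioc (0:ℝ) 1) (hδ : 0 < δ) :
    ∃ (n : ℕ) (p : Fin n → ℝ) (f : ℝ → ℝ) (X Y : Fin n → ℝ),
      (∀ i, 0 ≤ p i) ∧ (∑ i, p i = 1) ∧
      (∀ a b : ℝ, |f a - f b| ≤ |a - b|) ∧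
      sSup {w : ℝ | ∃ g : ℝ → ℝ, (∀ a b : ℝ, |g a - g b| ≤ |a - b|) ∧
          w = |(∑ i, p i * g (X i)) - ∑ i, p i * g (Y i)|} ≤ δ ∧
      (⨅ ν : ℝ, ν + (1/α) * ∑ i, p i * max (f (X i) - ν) 0) -
        (⨅ ν : ℝ, ν + (1/α) * ∑ i, p i * max (f (Y i) - ν) 0) ≥ δ / α := by
  obtain ⟨hα0, hα1⟩ := hα
  have hα0' : α ≠ 0 := ne_of_gt hα0
  have hinv : 0 < 1/α := by positivity
  refine ⟨2, ![α, 1-α], id, ![δ/α, 0], ![0, 0], ?_, ?_, ?_, ?_, ?_⟩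
  · intro i
    fin_cases i <;> simp <;> linarith
  · simp
  · intro a b; exact le_refl _
  · apply Real.sSup_le
    · rintro w ⟨g, hg, rfl⟩
      simp only [Fin.sum_univ_two, Matrix.cons_val_zero, Matrix.cons_val_one, Matrix.head_cons]
      have h1 : |g (δ/α) - g 0| ≤ |δ/α - 0| := hg _ _
      have h2 : |δ/α - 0| = δ/α := by
        rw [sub_zero, abs_of_pos]; positivity
      have key : α * g (δ/α) + (1-α) * g 0 - (α * g 0 + (1-α) * g 0)
          = α * (g (δ/α) - g 0) := by ring
      rw [key, abs_mul, abs_of_pos hα0]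
      calc α * |g (δ/α) - g 0| ≤ α * (δ/α) := by
            apply mul_le_mul_of_nonneg_left _ hα0.le
            rw [h2] at h1; exact h1
        _ = δ := by field_simp
    · linarith
  · have hX : δ/α ≤ ⨅ ν : ℝ, ν + (1/α) * ∑ i, (![α, 1-α]) i *
        max (id ((![δ/α, 0]) i) - ν) 0 := by
      apply le_ciInf
      intro ν
      simp only [Fin.sum_univ_two, Matrix.cons_val_zero, Matrix.cons_val_one, Matrix.head_cons,
        id_eq]
      have m1 : max (δ/α - ν) 0 ≥ δ/α - ν := le_max_left _ _
      have m2 : max (0 - ν) 0 ≥ 0 := le_max_right _ _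
      have e1 : (1/α) * (α * max (δ/α - ν) 0) = max (δ/α - ν) 0 := by field_simp
      have e2 : 0 ≤ (1/α) * ((1-α) * max (0 - ν) 0) := by
        apply mul_nonneg hinv.le
        exact mul_nonneg (by linarith) m2
      nlinarith
    have hY : (⨅ ν : ℝ, ν + (1/α) * ∑ i, (![α, 1-α]) i *
        max (id ((![(0:ℝ), 0]) i) - ν) 0) ≤ 0 := by
      have hbdd : BddBelow (Set.range fun ν : ℝ => ν + (1/α) * ∑ i, (![α, 1-α]) i *
          max (id ((![(0:ℝ), 0]) i) - ν) 0) := by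
        refine ⟨0, ?_⟩
        rintro x ⟨ν, rfl⟩
        simp only [Fin.sum_univ_two, Matrix.cons_val_zero, Matrix.cons_val_one, Matrix.head_cons,
          id_eq]
        have hsum : α * max (0 - ν) 0 + (1-α) * max (0 - ν) 0 = max (-ν) 0 := by
          rw [zero_sub]; ring
        rw [hsum]
        rcases le_or_gt 0 ν with h | h
        · have : max (-ν) 0 ≥ 0 := le_max_right _ _
          nlinarith
        · have : max (-ν) 0 = -ν := max_eq_left (by linarith)
          rw [this]
          have h1a : 1 ≤ 1/α := by
            rw [le_div_iff₀ hα0]; linarith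
          nlinarith
      calc (⨅ ν : ℝ, ν + (1/α) * ∑ i, (![α, 1-α]) i *
          max (id ((![(0:ℝ), 0]) i) - ν) 0) ≤ (0:ℝ) + (1/α) * ∑ i, (![α, 1-α]) i *
          max (id ((![(0:ℝ), 0]) i) - 0) 0 := ciInf_le hbdd 0
        _ = 0 := by simp
    linarith
end
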